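/- Let F be a field, n ≥ 2 and p ≥ 1, and let Φ : Mat_{n,p}(F) → F^n be an additive map such that Φ(M) lies in the column space of M for every matrix M. Then there exists a vector X ∈ F^p such that Φ(M) = MX for all M. -/

import Mathlib

/-- An additive range-compatible map `Φ : Mat_{n,p}(F) → F^n` with `n ≥ 2`
is of the form `M ↦ M X` for some fixed vector `X`. -/
theorem additive_range_compatible_is_mulVec (F : Type*) [Field F] (n p : ℕ)
    (hn : 2 ≤ n) (hp : 1 ≤ p)
    (Φ : Matrix (Fin n) (Fin p) F → (Fin n → F))
    (hadd : ∀ M N, Φ (M + N) = Φ M + Φ N)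
    (hrc : ∀ M, Φ M ∈ LinearMap.range M.mulVecLin) :
    ∃ X : Fin p → F, ∀ M, Φ M = M.mulVec X := by
  set φ : Matrix (Fin n) (Fin p) F →+ (Fin n → F) := AddMonoidHom.mk' Φ hadd with hφ
  have hφapp : ∀ M, φ M = Φ M := fun M => rfl
  -- Off-row entries of Φ on a standard basis matrix vanish
  have key0 : ∀ (i : Fin n) (j : Fin p) (a : F) (r : Fin n), r ≠ i →
      Φ (Matrix.single i j a) r = 0 := by
    intro i j a r hr
    obtain ⟨v, hv⟩ := hrc (Matrix.single i j a)
    rw [← hv]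
    simp only [Matrix.mulVecLin_apply, Matrix.single_mulVec]
    exact Function.update_of_ne hr _ _
  -- The diagonal entry is a times the coefficient from any other row
  have key2 : ∀ (i k : Fin n) (j : Fin p) (a : F), k ≠ i →
      Φ (Matrix.single i j a) i = a * Φ (Matrix.single k j 1) k := by
    intro i k j a hk
    obtain ⟨v, hv⟩ := hrc (Matrix.single i j a + Matrix.single k j 1)
    have hΦ := hadd (Matrix.single i j a) (Matrix.single k j 1)
    have hvi := congrFun hv i
    have hvk := congrFun hv k
    simp only [Matrix.mulVecLin_apply, Matrix.add_mulVec, Matrix.single_mulVec,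
      Pi.add_apply, hΦ] at hvi hvk
    simp only [Function.update_self, Function.update_of_ne hk,
      Function.update_of_ne (Ne.symm hk), key0 k j 1 i (Ne.symm hk),
      key0 i j a k hk, Pi.zero_apply, one_mul, add_zero, zero_add] at hvi hvk
    rw [← hvi, ← hvk]
  have h01 : (⟨0, by omega⟩ : Fin n) ≠ ⟨1, by omega⟩ := by
    simp [Fin.ext_iff]
  set i0 : Fin n := ⟨0, by omega⟩
  set i1 : Fin n := ⟨1, by omega⟩
  set X : Fin p → F := fun j => Φ (Matrix.single i0 j 1) i0 with hX
  -- Φ agrees with mulVec X on all standard basis matrices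
  have hall : ∀ (i : Fin n) (j : Fin p) (a : F),
      Φ (Matrix.single i j a) = (Matrix.single i j a).mulVec X := by
    intro i j a
    have hdiag : Φ (Matrix.single i j a) i = a * X j := by
      rcases eq_or_ne i i0 with rfl | hi
      · rw [key2 i0 i1 j a (Ne.symm h01), hX]
        have := key2 i1 i0 j 1 h01
        rw [one_mul] at this
        rw [this]
      · rw [key2 i i0 j a (fun h => hi h.symm), hX]
    funext r
    rw [Matrix.single_mulVec]
    rcases eq_or_ne r i with rfl | hr
    · rw [Function.update_self, hdiag]
    · rw [Function.update_of_ne hr, key0 i j a r hr, Pi.zero_apply]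
  refine ⟨X, fun M => ?_⟩
  have hM := Matrix.matrix_eq_sum_single M
  calc Φ M = φ M := rfl
    _ = φ (∑ i : Fin n, ∑ j : Fin p, Matrix.single i j (M i j)) := by rw [← hM]
    _ = ∑ i : Fin n, ∑ j : Fin p, Φ (Matrix.single i j (M i j)) := by
        rw [map_sum]; exact Finset.sum_congr rfl fun i _ => map_sum φ _ _
    _ = ∑ i : Fin n, ∑ j : Fin p, (Matrix.single i j (M i j)).mulVec X := by
        exact Finset.sum_congr rfl fun i _ => Finset.sum_congr rfl fun j _ => hall i j (M i j)
    _ = (∑ i : Fin n, ∑ j : Fin p, Matrix.single i j (M i j)).mulVec X := by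
        let ψ : Matrix (Fin n) (Fin p) F →+ (Fin n → F) :=
          AddMonoidHom.mk' (fun M => M.mulVec X) (fun A B => Matrix.add_mulVec A B X)
        show _ = ψ _
        rw [map_sum]
        exact Finset.sum_congr rfl fun i _ => (map_sum ψ _ _).symm
    _ = M.mulVec X := by rw [← hM]
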